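/- Any element of SL₂(k) (k a field of characteristic 0) together with the two unipotent matrices [[1,0],[u,1]] and [[1,v],[0,1]] with u, v ≠ 0 generates a subgroup whose Zariski closure is not contained in any Borel subgroup, any conjugate of the infinite dihedral group D_∞ (normalizer of the diagonal torus), or any finite subgroup of SL₂. Formal version: if G is a Zariski-closed subgroup of SL₂(k̄) (k̄ algebraically closed, characteristic 0) containing [[1,0],[u,1]] and [[1,v],[0,1]] with u·v ≠ 0, then G is not conjugate to a subgroup of upper triangular matrices, nor to a subgroup of the normalizer of the diagonal torus, nor finite — hence G = SL₂(k̄) by the classification of algebraic subgroups of SL₂. -/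

import Mathlib

open Matrix

namespace Stmt18Aux
variable {k : Type*} [Field k]

def Rm (t : k) : SpecialLinearGroup (Fin 2) k :=
  ⟨!![1, t; 0, 1], by simp [Matrix.det_fin_two_of]⟩

def Lm (t : k) : SpecialLinearGroup (Fin 2) k :=
  ⟨!![1, 0; t, 1], by simp [Matrix.det_fin_two_of]⟩

lemma closure_lemma (G : Subgroup (SpecialLinearGroup (Fin 2) k))
    (I : Set (MvPolynomial (Fin 2 × Fin 2) k))
    (hI : (G : Set (SpecialLinearGroup (Fin 2) k)) =
      {x : SpecialLinearGroup (Fin 2) k | ∀ p ∈ I, MvPolynomial.eval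
        (fun ij => (x : Matrix (Fin 2) (Fin 2) k) ij.1 ij.2) p = 0})
    (A : k → SpecialLinearGroup (Fin 2) k)
    (ent : Fin 2 × Fin 2 → Polynomial k)
    (hent : ∀ t ij, (ent ij).eval t = (A t : Matrix (Fin 2) (Fin 2) k) ij.1 ij.2)
    (S : Set k) (hS : S.Infinite) (hSG : ∀ s ∈ S, A s ∈ G) :
    ∀ t, A t ∈ G := by
  have hmem : ∀ x : SpecialLinearGroup (Fin 2) k, x ∈ G ↔ ∀ p ∈ I,
      MvPolynomial.eval (fun ij => (x : Matrix (Fin 2) (Fin 2) k) ij.1 ij.2) p = 0 := by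
    intro x
    rw [← SetLike.mem_coe, hI]
    rfl
  intro t
  rw [hmem]
  intro p hp
  set q : Polynomial k := MvPolynomial.eval₂ (Polynomial.C : k →+* Polynomial k) ent p with hq
  have key : ∀ s : k, q.eval s =
      MvPolynomial.eval (fun ij => (A s : Matrix (Fin 2) (Fin 2) k) ij.1 ij.2) p := by
    intro s
    have hcomp : (Polynomial.evalRingHom s).comp (Polynomial.C : k →+* Polynomial k)
        = RingHom.id k := by
      ext a; simp
    have hfun : (⇑(Polynomial.evalRingHom s)) ∘ ent
        = fun ij => (A s : Matrix (Fin 2) (Fin 2) k) ij.1 ij.2 :=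
      funext fun ij => hent s ij
    calc q.eval s = (Polynomial.evalRingHom s) (MvPolynomial.eval₂ Polynomial.C ent p) := rfl
      _ = MvPolynomial.eval₂ ((Polynomial.evalRingHom s).comp Polynomial.C)
            ((⇑(Polynomial.evalRingHom s)) ∘ ent) p :=
          MvPolynomial.eval₂_comp_left _ _ _ _
      _ = MvPolynomial.eval₂ (RingHom.id k)
            (fun ij => (A s : Matrix (Fin 2) (Fin 2) k) ij.1 ij.2) p := by
          rw [hcomp, hfun]
      _ = _ := by rw [MvPolynomial.eval₂_id]
  have hq0 : q = 0 := by
    apply Polynomial.eq_zero_of_infinite_isRoot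
    apply hS.mono
    intro s hs
    simp only [Set.mem_setOf_eq, Polynomial.IsRoot]
    rw [key s]
    exact (hmem (A s)).1 (hSG s hs) p hp
  have h := key t
  rw [hq0] at h
  simpa using h.symm

lemma val_mul_aux (X Y : SpecialLinearGroup (Fin 2) k) :
    Subtype.val (X * Y) = Subtype.val X * Subtype.val Y := rfl

lemma gen_lemma (G : Subgroup (SpecialLinearGroup (Fin 2) k))
    (hR : ∀ t : k, Rm t ∈ G) (hL : ∀ t : k, Lm t ∈ G) :
    ∀ A : SpecialLinearGroup (Fin 2) k, A ∈ G := by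
  have case1 : ∀ A : SpecialLinearGroup (Fin 2) k,
      (A : Matrix (Fin 2) (Fin 2) k) 1 0 ≠ 0 → A ∈ G := by
    intro A hc
    set a := (A : Matrix (Fin 2) (Fin 2) k) 0 0 with ha
    set b := (A : Matrix (Fin 2) (Fin 2) k) 0 1 with hb
    set c := (A : Matrix (Fin 2) (Fin 2) k) 1 0 with hcdef
    set d := (A : Matrix (Fin 2) (Fin 2) k) 1 1 with hd
    have hdet : a * d - b * c = 1 := by
      have := A.2
      rw [Matrix.det_fin_two] at this
      exact this
    have hA : A = Rm ((a - 1) / c) * Lm c * Rm ((d - 1) / c) := by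
      apply Subtype.ext
      simp only [val_mul_aux]
      simp only [Rm, Lm, Matrix.mul_fin_two]
      rw [Matrix.eta_fin_two (A : Matrix (Fin 2) (Fin 2) k)]
      ext i j
      fin_cases i <;> fin_cases j <;>
        simp only [Matrix.cons_val', Matrix.cons_val_zero, Matrix.cons_val_one,
          Matrix.head_cons, Matrix.head_fin_const, Matrix.cons_val_fin_one, Matrix.of_apply,
          Fin.isValue, Fin.zero_eta, Fin.mk_one, ← ha, ← hb, ← hcdef, ← hd] <;>
        field_simp
      · ring
      · linear_combination -hdet
      · ring
      · ring
    rw [hA]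
    exact mul_mem (mul_mem (hR _) (hL _)) (hR _)
  intro A
  by_cases hc : (A : Matrix (Fin 2) (Fin 2) k) 1 0 ≠ 0
  · exact case1 A hc
  · push_neg at hc
    have hd : (A : Matrix (Fin 2) (Fin 2) k) 1 1 ≠ 0 := by
      intro h
      have := A.2
      rw [Matrix.det_fin_two, hc, h] at this
      simp at this
    have h1 : ((A * Lm 1 : SpecialLinearGroup (Fin 2) k) :
        Matrix (Fin 2) (Fin 2) k) 1 0 ≠ 0 := by
      simp only [val_mul_aux]
      simp only [Lm]
      rw [Matrix.eta_fin_two (A : Matrix (Fin 2) (Fin 2) k), Matrix.mul_fin_two]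
      simpa [hc] using hd
    have h2 : A * Lm 1 ∈ G := case1 _ h1
    have h3 : A = (A * Lm 1) * Lm (-1) := by
      have : Lm (1:k) * Lm (-1) = 1 := by
        apply Subtype.ext
        rw [val_mul_aux]
        simp [Lm, Matrix.mul_fin_two, Matrix.one_fin_two]
      rw [mul_assoc, this, mul_one]
    rw [h3]
    exact mul_mem h2 (hL _)
end Stmt18Aux


open Stmt18Aux in
/-- Let `k` be an algebraically closed field of characteristic 0 and `G` a
Zariski-closed subgroup of `SL₂(k)` (its underlying set is the zero locus of a
set of polynomials in the matrix entries) containing the unipotent matrices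
`[[1,0],[u,1]]` and `[[1,v],[0,1]]` with `u·v ≠ 0`. Then `G` is not conjugate
to a subgroup of the upper triangular matrices, nor to a subgroup of the
normalizer of the diagonal torus, nor finite — hence, by the classification of
algebraic subgroups of `SL₂`, `G = SL₂(k)`. -/
theorem stmt_18 {k : Type*} [Field k] [IsAlgClosed k] [CharZero k]
    (G : Subgroup (Matrix.SpecialLinearGroup (Fin 2) k))
    (hGclosed : ∃ I : Set (MvPolynomial (Fin 2 × Fin 2) k),
      (G : Set (Matrix.SpecialLinearGroup (Fin 2) k)) =
        {x : Matrix.SpecialLinearGroup (Fin 2) k | ∀ p ∈ I, MvPolynomial.eval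
          (fun ij => (x : Matrix (Fin 2) (Fin 2) k) ij.1 ij.2) p = 0})
    (u v : k) (hu : u ≠ 0) (hv : v ≠ 0)
    (U₁ U₂ : Matrix.SpecialLinearGroup (Fin 2) k)
    (hU₁ : (U₁ : Matrix (Fin 2) (Fin 2) k) = !![1, 0; u, 1])
    (hU₂ : (U₂ : Matrix (Fin 2) (Fin 2) k) = !![1, v; 0, 1])
    (hU₁G : U₁ ∈ G) (hU₂G : U₂ ∈ G) :
    (¬ ∃ g : Matrix (Fin 2) (Fin 2) k, IsUnit g.det ∧
        ∀ x ∈ G, (g * (x : Matrix (Fin 2) (Fin 2) k) * g⁻¹) 1 0 = 0) ∧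
    (¬ ∃ g : Matrix (Fin 2) (Fin 2) k, IsUnit g.det ∧
        ∀ x ∈ G, ((g * (x : Matrix (Fin 2) (Fin 2) k) * g⁻¹) 0 1 = 0 ∧
                  (g * (x : Matrix (Fin 2) (Fin 2) k) * g⁻¹) 1 0 = 0) ∨
                 ((g * (x : Matrix (Fin 2) (Fin 2) k) * g⁻¹) 0 0 = 0 ∧
                  (g * (x : Matrix (Fin 2) (Fin 2) k) * g⁻¹) 1 1 = 0)) ∧
    (¬ (G : Set (Matrix.SpecialLinearGroup (Fin 2) k)).Finite) ∧
    G = ⊤ := by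
  classical
  obtain ⟨I, hI⟩ := hGclosed
  -- powers of the unipotents
  have hU₂pow : ∀ n : ℕ, ((U₂ ^ n : Matrix.SpecialLinearGroup (Fin 2) k) :
      Matrix (Fin 2) (Fin 2) k) = !![1, (n : k) * v; 0, 1] := by
    intro n
    induction n with
    | zero => simp [Matrix.one_fin_two]
    | succ n ih =>
      rw [pow_succ, Matrix.SpecialLinearGroup.coe_mul, ih, hU₂, Matrix.mul_fin_two]
      ext i j
      fin_cases i <;> fin_cases j <;> simp <;> push_cast <;> ring
  have hU₁pow : ∀ n : ℕ, ((U₁ ^ n : Matrix.SpecialLinearGroup (Fin 2) k) :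
      Matrix (Fin 2) (Fin 2) k) = !![1, 0; (n : k) * u, 1] := by
    intro n
    induction n with
    | zero => simp [Matrix.one_fin_two]
    | succ n ih =>
      rw [pow_succ, Matrix.SpecialLinearGroup.coe_mul, ih, hU₁, Matrix.mul_fin_two]
      ext i j
      fin_cases i <;> fin_cases j <;> simp <;> push_cast <;> ring
  -- full one-parameter subgroups lie in G
  have hR : ∀ t : k, Rm t ∈ G := by
    apply closure_lemma G I hI Rm
      (fun ij => !![Polynomial.C 1, Polynomial.X; Polynomial.C 0, Polynomial.C 1] ij.1 ij.2)
      ?_ (Set.range fun n : ℕ => (n : k) * v) ?_ ?_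
    · rintro t ⟨i, j⟩
      fin_cases i <;> fin_cases j <;> simp [Rm]
    · apply Set.infinite_range_of_injective
      intro m n h
      have : (m : k) = n := mul_right_cancel₀ hv h
      exact_mod_cast this
    · rintro s ⟨n, rfl⟩
      have : Rm ((n : k) * v) = U₂ ^ n := by
        apply Subtype.ext
        rw [hU₂pow]
        rfl
      rw [this]
      exact pow_mem hU₂G n
  have hL : ∀ t : k, Lm t ∈ G := by
    apply closure_lemma G I hI Lm
      (fun ij => !![Polynomial.C 1, Polynomial.C 0; Polynomial.X, Polynomial.C 1] ij.1 ij.2)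
      ?_ (Set.range fun n : ℕ => (n : k) * u) ?_ ?_
    · rintro t ⟨i, j⟩
      fin_cases i <;> fin_cases j <;> simp [Lm]
    · apply Set.infinite_range_of_injective
      intro m n h
      have : (m : k) = n := mul_right_cancel₀ hu h
      exact_mod_cast this
    · rintro s ⟨n, rfl⟩
      have : Lm ((n : k) * u) = U₁ ^ n := by
        apply Subtype.ext
        rw [hU₁pow]
        rfl
      rw [this]
      exact pow_mem hU₁G n
  have htop : ∀ A : Matrix.SpecialLinearGroup (Fin 2) k, A ∈ G := gen_lemma G hR hL
  have hGtop : G = ⊤ := by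
    ext x
    simp [htop x]
  -- a helper for the conjugation arguments
  have conj_helper : ∀ (g : Matrix (Fin 2) (Fin 2) k), IsUnit g.det →
      ∀ z : Matrix.SpecialLinearGroup (Fin 2) k,
      ∃ x : Matrix.SpecialLinearGroup (Fin 2) k, x ∈ G ∧
        g * (x : Matrix (Fin 2) (Fin 2) k) * g⁻¹ = (z : Matrix (Fin 2) (Fin 2) k) := by
    intro g hgu z
    have hginv : g * g⁻¹ = 1 := Matrix.mul_nonsing_inv g hgu
    have hdetne : g.det ≠ 0 := hgu.ne_zero
    set y := g⁻¹ * (z : Matrix (Fin 2) (Fin 2) k) * g with hy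
    have hdety : y.det = 1 := by
      rw [hy, Matrix.det_mul, Matrix.det_mul, Matrix.det_nonsing_inv, z.2,
        Ring.inverse_eq_inv']
      field_simp
    refine ⟨⟨y, hdety⟩, htop _, ?_⟩
    show g * y * g⁻¹ = _
    rw [hy, show g * (g⁻¹ * (z : Matrix (Fin 2) (Fin 2) k) * g) * g⁻¹
      = (g * g⁻¹) * (z : Matrix (Fin 2) (Fin 2) k) * (g * g⁻¹) by noncomm_ring,
      hginv, one_mul, mul_one]
  refine ⟨?_, ?_, ?_, hGtop⟩
  · rintro ⟨g, hgu, hg⟩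
    obtain ⟨x, hxG, hx⟩ := conj_helper g hgu (Lm 1)
    have := hg x hxG
    rw [hx] at this
    simp [Lm] at this
  · rintro ⟨g, hgu, hg⟩
    obtain ⟨x, hxG, hx⟩ := conj_helper g hgu (Rm 1)
    have := hg x hxG
    rw [hx] at this
    rcases this with ⟨h1, -⟩ | ⟨h1, -⟩ <;> simp [Rm] at h1
  · intro hf
    have hinj : Function.Injective (fun t : k => Rm t) := by
      intro s t h
      have := congrArg (fun A : Matrix.SpecialLinearGroup (Fin 2) k =>
        (A : Matrix (Fin 2) (Fin 2) k) 0 1) h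
      simpa [Rm] using this
    have hsub : (Set.range fun t : k => Rm t) ⊆
        (G : Set (Matrix.SpecialLinearGroup (Fin 2) k)) := by
      rintro _ ⟨t, rfl⟩
      exact hR t
    exact ((Set.infinite_range_of_injective hinj).mono hsub) hf
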